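/- Let G be a graphing and P the partition of its vertex set into connected components. Then P is a B-partition (saturations of Borel sets are Borel) and P has the re-randomizing property with respect to the underlying measure λ. -/

import Mathlib

open MeasureTheory

/-- A graphing: a bounded-degree Borel graph `(J, E)` on a standard Borel space together
with a probability measure `μ` satisfying the measure-preservation (intrinsic
mass-transport) equation `∫_A deg_B = ∫_B deg_A`. -/
structure Graphing (J : Type*) [MeasurableSpace J] where
  /-- the (symmetric) adjacency relation -/
  E : J → J → Prop
  symm : ∀ x y, E x y → E y x
  measE : MeasurableSet {p : J × J | E p.1 p.2}
  /-- the underlying probability measure -/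
  μ : Measure J
  prob : IsProbabilityMeasure μ
  /-- the degree bound -/
  D : ℕ
  degFin : ∀ x, {y | E x y}.Finite
  degBound : ∀ x, ({y | E x y}).ncard ≤ D
  mp : ∀ A B : Set J, MeasurableSet A → MeasurableSet B →
    ∫ x in A, (({y ∈ B | E x y}).ncard : ℝ) ∂μ = ∫ x in B, (({y ∈ A | E x y}).ncard : ℝ) ∂μ

namespace Graphing

variable {J : Type*} [MeasurableSpace J]

/-- The edge set of a graphing, as a (symmetric) set of ordered pairs. -/
def edgeSet (G : Graphing J) : Set (J × J) := {p | G.E p.1 p.2}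

/-- A Borel symmetric subset of the edge set of `G`. -/
def IsEdgeSubset (G : Graphing J) (X : Set (J × J)) : Prop :=
  MeasurableSet X ∧ (∀ x y, (x, y) ∈ X → (y, x) ∈ X) ∧ X ⊆ G.edgeSet

/-- The vertex set of the connected component of `x` in the graph with edge set `X`. -/
def compo (X : Set (J × J)) (x : J) : Set J :=
  {y | Relation.ReflTransGen (fun a b => (a, b) ∈ X) x y}

/-- The number of edges of `X` incident with `x`. -/
noncomputable def degX (X : Set (J × J)) (x : J) : ℕ := ({y | (x, y) ∈ X}).ncard

/-- The average degree `d̄` of a graphing. -/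
noncomputable def avgDeg (G : Graphing J) : ℝ := ∫ x, (({y | G.E x y}).ncard : ℝ) ∂G.μ

/-- The edge measure `η` of a graphing: `η(X) = (1/d̄) ∫ deg_X dμ`. -/
noncomputable def eta (G : Graphing J) (X : Set (J × J)) : ℝ :=
  (∫ x, (degX X x : ℝ) ∂G.μ) / G.avgDeg

/-- The normalized rank `ρ(X) = 1 − E_u(1/|V(G^X_u)|)` of a Borel edge set `X`, with the
convention `1/|V| = 0` for infinite components (`Nat.card` of an infinite set is `0`). -/
noncomputable def rho (G : Graphing J) (X : Set (J × J)) : ℝ :=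
  1 - ∫ x, (1 : ℝ) / (Nat.card ↥(compo X x)) ∂G.μ

/-- A graphing is hyperfinite if edge sets of arbitrarily small edge measure can be
removed so that only finite connected components remain. -/
def Hyperfinite (G : Graphing J) : Prop :=
  ∀ ε : ℝ, 0 < ε → ∃ X : Set (J × J), G.IsEdgeSubset X ∧ G.eta X < ε ∧
    ∀ x : J, (compo (G.edgeSet \ X) x).Finite

/-- A set of edges is a forest if for every edge `(a,b)` there is no path from `a` to `b`
avoiding that edge; equivalently, the graph it spans has no cycles. -/
def IsForestSet (X : Set (J × J)) : Prop :=
  ∀ a b : J, (a, b) ∈ X →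
    ¬ Relation.ReflTransGen
        (fun u v => (u, v) ∈ X ∧ ¬((u = a ∧ v = b) ∨ (u = b ∧ v = a))) a b

/-- A graphing is a forest (all components are trees) if its edge set is a forest. -/
def IsForest (G : Graphing J) : Prop := IsForestSet G.edgeSet

end Graphing


/-- The class of the partition (setoid) `s` containing `x`. -/
def Setoid.cls {J : Type*} (s : Setoid J) (x : J) : Set J := {y | s.r x y}

/-- The saturation of a set `A`: the union of all classes of `s` meeting `A`. -/
def Setoid.sat {J : Type*} (s : Setoid J) (A : Set J) : Set J := {x | ∃ y ∈ A, s.r x y}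

/-- A partition is a `B`-partition if the saturation of every Borel (measurable) set
is Borel (measurable). -/
def IsBPartition {J : Type*} [MeasurableSpace J] (s : Setoid J) : Prop :=
  ∀ A : Set J, MeasurableSet A → MeasurableSet (s.sat A)

open scoped Classical

/-- The probability that, picking a `π`-random point and re-randomizing it along `s`
(i.e. replacing it by a uniform random point of its class when that class is finite,
keeping it otherwise), the resulting point lies in `A`. -/
noncomputable def rerandProb {J : Type*} [MeasurableSpace J] (s : Setoid J)
    (π : MeasureTheory.Measure J) (A : Set J) : ℝ :=
  ∫ x, (if (s.cls x).Finite then (Nat.card ↥(s.cls x ∩ A) : ℝ) / (Nat.card ↥(s.cls x))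
        else A.indicator 1 x) ∂π

/-- A partition `s` has the re-randomizing property with respect to `π` if re-randomizing
a `π`-random point along `s` again yields a point distributed according to `π`. -/
def HasRerand {J : Type*} [MeasurableSpace J] (s : Setoid J)
    (π : MeasureTheory.Measure J) : Prop :=
  ∀ A : Set J, MeasurableSet A → rerandProb s π A = (π A).toReal


namespace GraphingAux
noncomputable section
set_option linter.unusedSectionVars false
set_option maxHeartbeats 1000000
open Set Function
open scoped ENNReal Classical
variable {J : Type*} [MeasurableSpace J] [StandardBorelSpace J]


set_option linter.unusedSectionVars false
variable {J : Type*} [MeasurableSpace J] [StandardBorelSpace J]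

def psec (Q : Set (J × ℝ)) (x : J) : Set ℝ := {t | (x, t) ∈ Q}

/-- dyadic "box index" of a real number at level `L` -/
def flr (L : ℕ) (t : ℝ) : ℤ := ⌊t * 2 ^ L⌋

lemma measurable_flr (L : ℕ) : Measurable (flr L) := by
  unfold flr; measurability

lemma exists_floor_sep {a b : ℝ} (hab : a ≠ b) :
    ∃ L₀ : ℕ, ∀ L, L₀ ≤ L → flr L a ≠ flr L b := by
  obtain ⟨L₀, hL₀⟩ := pow_unbounded_of_one_lt (|a - b|⁻¹) (by norm_num : (1:ℝ) < 2)
  refine ⟨L₀, fun L hL h => ?_⟩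
  have h2 : (0:ℝ) < 2 ^ L := by positivity
  have habs : |a * 2 ^ L - b * 2 ^ L| < 1 := by
    unfold flr at h
    have h1 := Int.floor_le (a * 2 ^ L)
    have h2' := Int.lt_floor_add_one (a * 2 ^ L)
    have h3 := Int.floor_le (b * 2 ^ L)
    have h4 := Int.lt_floor_add_one (b * 2 ^ L)
    rw [abs_sub_lt_iff]
    constructor <;> [skip; skip] <;> rw [h] at * <;> linarith
  have hne : (0:ℝ) < |a - b| := abs_pos.mpr (sub_ne_zero.mpr hab)
  have hmono : |a - b|⁻¹ < 2 ^ L := lt_of_lt_of_le hL₀ (by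
    apply pow_le_pow_right₀ (by norm_num) hL)
  have : 1 < |a - b| * 2 ^ L := by
    rw [inv_lt_iff_one_lt_mul₀ hne] at hmono
    linarith [hmono]
  have habs2 : |a * 2 ^ L - b * 2 ^ L| = |a - b| * 2 ^ L := by
    rw [← sub_mul, abs_mul, abs_of_pos h2]
  linarith [habs, habs2.symm ▸ this]

lemma exists_sep {s : Set ℝ} (hs : s.Finite) :
    ∃ L : ℕ, InjOn (flr L) s := by
  have main : ∃ L₀ : ℕ, ∀ L, L₀ ≤ L → InjOn (flr L) s := by
    refine Set.Finite.induction_on (motive := fun s _ => ∃ L₀ : ℕ, ∀ L, L₀ ≤ L → InjOn (flr L) s) s hs ?_ ?_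
    · exact ⟨0, fun L _ => injOn_empty _⟩
    · rintro a t hat htf ⟨L₁, hL₁⟩
      have hsep : ∀ b : t.Elem, ∃ L₀ : ℕ, ∀ L, L₀ ≤ L → flr L a ≠ flr L (b : ℝ) := by
        intro b
        exact exists_floor_sep (fun h => hat (h ▸ b.2))
      choose Lb hLb using hsep
      haveI : Fintype t.Elem := htf.fintype
      refine ⟨max L₁ (Finset.univ.sup Lb), fun L hL => ?_⟩
      have hL1 : L₁ ≤ L := le_trans (le_max_left _ _) hL
      have hLb' : ∀ b : t.Elem, Lb b ≤ L :=
        fun b => le_trans (le_trans (Finset.le_sup (Finset.mem_univ b)) (le_max_right _ _)) hL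
      intro u hu v hv huv
      rcases hu with rfl | hu <;> rcases hv with rfl | hv
      · rfl
      · exact absurd huv (hLb ⟨v, hv⟩ L (hLb' _))
      · exact absurd huv.symm (hLb ⟨u, hu⟩ L (hLb' _))
      · exact hL₁ L hL1 hu hv huv
  obtain ⟨L₀, h⟩ := main
  exact ⟨L₀, h L₀ le_rfl⟩


open scoped Classical in
/-- if a set of `≤ k` reals meets `k` pairwise distinct dyadic cells, each cell
contains exactly one point. -/
lemma cells_unique {Q : Set (J × ℝ)} {x : J} {k L : ℕ} {bs : List ℤ}
    (hfinx : (psec Q x).Finite) (hx : (psec Q x).ncard ≤ k)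
    (hlen : bs.length = k) (hnd : bs.Nodup)
    (hmeet : ∀ i, i < k → ∃ t, t ∈ psec Q x ∧ flr L t = bs.getD i 0) :
    ∀ i, i < k → ∀ t u, (t ∈ psec Q x ∧ flr L t = bs.getD i 0) →
      (u ∈ psec Q x ∧ flr L u = bs.getD i 0) → t = u := by
  set S : Finset ℝ := hfinx.toFinset with hS
  set C : ℕ → Finset ℝ := fun i => S.filter (fun t => flr L t = bs.getD i 0) with hC
  have hmem : ∀ i t, t ∈ C i ↔ (t ∈ psec Q x ∧ flr L t = bs.getD i 0) := by
    intro i t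
    simp [hC, hS, Finset.mem_filter, Set.Finite.mem_toFinset]
  have h1 : ∀ i ∈ Finset.range k, 1 ≤ (C i).card := by
    intro i hi
    obtain ⟨t, ht⟩ := hmeet i (Finset.mem_range.mp hi)
    exact Finset.card_pos.mpr ⟨t, (hmem i t).mpr ht⟩
  have hdisj : ∀ i ∈ Finset.range k, ∀ j ∈ Finset.range k, i ≠ j →
      Disjoint (C i) (C j) := by
    intro i hi j hj hij
    have hi' := Finset.mem_range.mp hi
    have hj' := Finset.mem_range.mp hj
    have hne : bs.getD i 0 ≠ bs.getD j 0 := by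
      rw [List.getD_eq_getElem bs 0 (by omega : i < bs.length),
          List.getD_eq_getElem bs 0 (by omega : j < bs.length)]
      intro h
      exact hij (List.Nodup.getElem_inj_iff hnd |>.mp h)
    refine Finset.disjoint_left.mpr (fun t hti htj => ?_)
    exact hne (((hmem i t).mp hti).2 ▸ ((hmem j t).mp htj).2 ▸ rfl)
  have hsum : ∑ i ∈ Finset.range k, (C i).card ≤ k := by
    rw [← Finset.card_biUnion hdisj]
    calc ((Finset.range k).biUnion C).card ≤ S.card := by
          apply Finset.card_le_card
          intro t ht
          obtain ⟨i, _, hti⟩ := Finset.mem_biUnion.mp ht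
          exact (Set.Finite.mem_toFinset hfinx).mpr ((hmem i t).mp hti).1
      _ = (psec Q x).ncard := (Set.ncard_eq_toFinset_card _ hfinx).symm
      _ ≤ k := hx
  have hone : ∀ i ∈ Finset.range k, (C i).card = 1 := by
    by_contra hcon
    push_neg at hcon
    obtain ⟨i₀, hi₀, hnei⟩ := hcon
    have h2 : 2 ≤ (C i₀).card := by
      have := h1 i₀ hi₀; omega
    have : ∑ i ∈ Finset.range k, 1 < ∑ i ∈ Finset.range k, (C i).card :=
      Finset.sum_lt_sum h1 ⟨i₀, hi₀, by omega⟩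
    simp only [Finset.sum_const, Finset.card_range, smul_eq_mul, mul_one] at this
    omega
  intro i hi t u ht hu
  have hcard := hone i (Finset.mem_range.mpr hi)
  have := Finset.card_le_one.mp (le_of_eq hcard)
  exact this t ((hmem i t).mpr ht) u ((hmem i u).mpr hu)


/-- the fibred set of tuples of points of the section lying in prescribed dyadic cells -/
def Gset (Q : Set (J × ℝ)) (W : Set J) (L : ℕ) (bs : List ℤ) : Set (J × (ℕ → ℝ)) :=
  {p | p.1 ∈ W ∧ (∀ i, i < bs.length →
      ((p.1, p.2 i) ∈ Q ∧ flr L (p.2 i) = bs.getD i 0)) ∧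
    ∀ i, bs.length ≤ i → p.2 i = 0}

lemma measurable_Gset {Q : Set (J × ℝ)} (hQ : MeasurableSet Q) {W : Set J}
    (hW : MeasurableSet W) (L : ℕ) (bs : List ℤ) : MeasurableSet (Gset Q W L bs) := by
  have heq : Gset Q W L bs =
      (Prod.fst ⁻¹' W) ∩
      ((⋂ i, ⋂ (_ : i < bs.length),
        (((fun p : J × (ℕ → ℝ) => (p.1, p.2 i)) ⁻¹' Q) ∩
          {p : J × (ℕ → ℝ) | flr L (p.2 i) = bs.getD i 0})) ∩
      (⋂ i, ⋂ (_ : bs.length ≤ i), {p : J × (ℕ → ℝ) | p.2 i = 0})) := by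
    ext p
    simp only [Gset, mem_setOf_eq, mem_inter_iff, mem_preimage, mem_iInter, mem_setOf_eq]
    try tauto
  rw [heq]
  have hev : ∀ i : ℕ, Measurable (fun p : J × (ℕ → ℝ) => p.2 i) :=
    fun i => (measurable_pi_apply i).comp measurable_snd
  refine (measurable_fst hW).inter (MeasurableSet.inter ?_ ?_)
  · refine MeasurableSet.iInter (fun i => MeasurableSet.iInter (fun _ => ?_))
    refine MeasurableSet.inter ?_ ?_
    · exact (measurable_fst.prodMk (hev i)) hQ
    · exact ((measurable_flr L).comp (hev i)) (measurableSet_singleton _)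
  · refine MeasurableSet.iInter (fun i => MeasurableSet.iInter (fun _ => ?_))
    exact (hev i) (measurableSet_singleton _)

/-- sections of `Gset` over the small-section part are singletons. -/
lemma Gset_section_unique {Q : Set (J × ℝ)} (hfin : ∀ x : J, (psec Q x).Finite)
    {W : Set J} {L : ℕ} {bs : List ℤ}
    (hW : ∀ x ∈ W, (psec Q x).ncard ≤ bs.length) (hnd : bs.Nodup)
    {x : J} {v v' : ℕ → ℝ} (h : (x, v) ∈ Gset Q W L bs) (h' : (x, v') ∈ Gset Q W L bs) :
    v = v' := by
  obtain ⟨hxW, hv, hv0⟩ := h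
  obtain ⟨-, hv', hv0'⟩ := h'
  have hmeet : ∀ i, i < bs.length → ∃ t, t ∈ psec Q x ∧ flr L t = bs.getD i 0 :=
    fun i hi => ⟨v i, (hv i hi).1, (hv i hi).2⟩
  have key := cells_unique (hfinx := hfin x) (hx := hW x hxW) (hlen := rfl) hnd hmeet
  funext i
  rcases Nat.lt_or_ge i bs.length with hi | hi
  · exact key i hi (v i) (v' i) ⟨(hv i hi).1, (hv i hi).2⟩ ⟨(hv' i hi).1, (hv' i hi).2⟩
  · exact (hv0 i hi).trans (hv0' i hi).symm

lemma injOn_fst_Gset {Q : Set (J × ℝ)} (hfin : ∀ x : J, (psec Q x).Finite)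
    {W : Set J} {L : ℕ} {bs : List ℤ}
    (hW : ∀ x ∈ W, (psec Q x).ncard ≤ bs.length) (hnd : bs.Nodup) :
    InjOn Prod.fst (Gset Q W L bs) := by
  rintro ⟨x, v⟩ h ⟨x', v'⟩ h' (heq : x = x')
  subst heq
  have := Gset_section_unique hfin hW hnd h h'
  simp [this]

/-- basic selection lemma: a measurable set with unique vertical sections has a measurable
projection, and admits a measurable selection function. -/
lemma exists_selection {R : Set (J × ℝ)} (hR : MeasurableSet R) (hinj : InjOn Prod.fst R) :
    MeasurableSet (Prod.fst '' R) ∧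
      ∃ f : J → ℝ, Measurable f ∧ ∀ x ∈ Prod.fst '' R, (x, f x) ∈ R := by
  have himg : ∀ (B : Set ℝ), MeasurableSet B → MeasurableSet (Prod.fst '' (R ∩ (univ ×ˢ B))) := by
    intro B hB
    refine MeasurableSet.image_of_measurable_injOn ?_ measurable_fst
      (hinj.mono inter_subset_left)
    exact hR.inter (MeasurableSet.univ.prod hB)
  have hV : MeasurableSet (Prod.fst '' R) := by
    have := himg univ MeasurableSet.univ
    simpa using this
  refine ⟨hV, ?_⟩
  set f : J → ℝ := fun x => sSup (psec R x) with hf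
  have hsec : ∀ x ∈ Prod.fst '' R, psec R x = {f x} := by
    rintro x ⟨⟨x', t⟩, hxt, rfl⟩
    have hsub : psec R x' = {t} := by
      apply Subset.antisymm
      · intro u hu
        have : (x', u) ∈ R := hu
        have := hinj this hxt rfl
        simp only [Prod.mk.injEq] at this
        simp [this.2]
      · intro u hu
        simp only [mem_singleton_iff] at hu
        subst hu; exact hxt
    have hft : f x' = t := by simp only [hf, hsub, csSup_singleton]
    rw [hsub, hft]
  have hfmem : ∀ x ∈ Prod.fst '' R, (x, f x) ∈ R := by
    intro x hx
    have := hsec x hx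
    have : f x ∈ psec R x := by rw [this]; exact rfl
    exact this
  refine ⟨f, ?_, hfmem⟩
  apply measurable_of_Iic
  intro a
  have heq : f ⁻¹' Iic a =
      (Prod.fst '' (R ∩ (univ ×ˢ Iic a))) ∪ (if (0:ℝ) ≤ a then (Prod.fst '' R)ᶜ else ∅) := by
    ext x
    by_cases hx : x ∈ Prod.fst '' R
    · have hs := hsec x hx
      simp only [mem_preimage, mem_Iic, mem_union]
      constructor
      · intro hfa
        left
        exact ⟨(x, f x), ⟨hfmem x hx, by simp [hfa]⟩, rfl⟩
      · rintro (⟨⟨x', t⟩, ⟨htR, ht⟩, rfl⟩ | hbad)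
        · have : t ∈ psec R x' := htR
          rw [hs] at this
          simp only [mem_singleton_iff] at this
          subst this
          simpa using ht.2
        · split at hbad
          · exact absurd hx hbad
          · exact absurd hbad (notMem_empty x)
    · have hempty : psec R x = ∅ := by
        ext t
        simp only [mem_empty_iff_false, iff_false]
        intro ht
        exact hx ⟨(x, t), ht, rfl⟩
      have hfx : f x = 0 := by rw [hf]; simp [hempty, Real.sSup_empty]
      simp only [mem_preimage, mem_Iic, hfx, mem_union]
      constructor
      · intro h0a
        right
        simp [if_pos h0a, hx]
      · rintro (⟨⟨x', t⟩, ⟨htR, ht⟩, rfl⟩ | hbad)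
        · exact absurd ⟨(x', t), htR, rfl⟩ hx
        · split at hbad
          · assumption
          · exact absurd hbad (notMem_empty x)
  rw [heq]
  refine (himg _ measurableSet_Iic).union ?_
  split
  · exact hV.compl
  · exact MeasurableSet.empty


-- new material

lemma getD_ne {bs : List ℤ} (hnd : bs.Nodup) {i j : ℕ}
    (hi : i < bs.length) (hj : j < bs.length) (hij : i ≠ j) :
    bs.getD i 0 ≠ bs.getD j 0 := by
  rw [List.getD_eq_getElem bs 0 hi, List.getD_eq_getElem bs 0 hj]
  intro h
  exact hij (List.Nodup.getElem_inj_iff hnd |>.mp h)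

/-- membership in the projection of `Gset` forces the section to have at least
`bs.length` elements. -/
lemma ncard_ge_of_mem_Gset {Q : Set (J × ℝ)} (hfin : ∀ x : J, (psec Q x).Finite)
    {W : Set J} {L : ℕ} {bs : List ℤ} (hnd : bs.Nodup) {x : J} {v : ℕ → ℝ}
    (h : (x, v) ∈ Gset Q W L bs) : bs.length ≤ (psec Q x).ncard := by
  obtain ⟨-, hv, -⟩ := h
  classical
  have hinj : ∀ i ∈ Finset.range bs.length, ∀ j ∈ Finset.range bs.length,
      v i = v j → i = j := by
    intro i hi j hj hvij
    by_contra hij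
    have hi' := Finset.mem_range.mp hi
    have hj' := Finset.mem_range.mp hj
    have e1 : flr L (v i) = bs.getD i 0 := (hv i hi').2
    have e2 : flr L (v j) = bs.getD j 0 := (hv j hj').2
    exact getD_ne hnd hi' hj' hij (by rw [← e1, ← e2, hvij])
  have hsub : (Finset.range bs.length).image v ⊆ (hfin x).toFinset := by
    intro t ht
    obtain ⟨i, hi, rfl⟩ := Finset.mem_image.mp ht
    exact (Set.Finite.mem_toFinset _).mpr (hv i (Finset.mem_range.mp hi)).1
  calc bs.length = ((Finset.range bs.length).image v).card :=
        (Finset.card_image_of_injOn hinj).symm ▸ (Finset.card_range _).symm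
    _ ≤ (hfin x).toFinset.card := Finset.card_le_card hsub
    _ = (psec Q x).ncard := (Set.ncard_eq_toFinset_card _ (hfin x)).symm

/-- conversely, a point whose section has exactly `k` elements lies in the projection of a
suitable `Gset`, built from a separating dyadic level. -/
lemma mem_Gset_of_ncard_eq {Q : Set (J × ℝ)} (hfin : ∀ x : J, (psec Q x).Finite)
    {W : Set J} {x : J} (hxW : x ∈ W) {k : ℕ} (hk : (psec Q x).ncard = k) :
    ∃ (L : ℕ) (bs : List ℤ) (v : ℕ → ℝ), bs.Nodup ∧ bs.length = k ∧
      (x, v) ∈ Gset Q W L bs ∧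
      ∀ t, t ∈ psec Q x → ∃ i, i < k ∧ flr L t = bs.getD i 0 := by
  classical
  obtain ⟨L, hL⟩ := exists_sep (hfin x)
  set fs : Finset ℤ := (hfin x).toFinset.image (flr L) with hfs
  have hfscard : fs.card = k := by
    rw [hfs, Finset.card_image_of_injOn (by
      intro a ha b hb hab
      exact hL ((Set.Finite.mem_toFinset _).mp ha) ((Set.Finite.mem_toFinset _).mp hb) hab)]
    rw [← hk, Set.ncard_eq_toFinset_card _ (hfin x)]
  set bs : List ℤ := fs.toList with hbs
  have hnd : bs.Nodup := Finset.nodup_toList fs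
  have hlen : bs.length = k := by rw [hbs, Finset.length_toList, hfscard]
  have hmeet : ∀ i, i < bs.length → ∃ t, t ∈ psec Q x ∧ flr L t = bs.getD i 0 := by
    intro i hi
    have : bs.getD i 0 ∈ bs := by
      rw [List.getD_eq_getElem bs 0 hi]; exact List.getElem_mem _
    have : bs.getD i 0 ∈ fs := by rwa [hbs, Finset.mem_toList] at this
    obtain ⟨t, ht, hft⟩ := Finset.mem_image.mp (hfs ▸ this)
    exact ⟨t, (Set.Finite.mem_toFinset _).mp ht, hft⟩
  set v : ℕ → ℝ := fun i => if h : i < bs.length then (hmeet i h).choose else 0 with hv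
  refine ⟨L, bs, v, hnd, hlen, ⟨hxW, ?_, ?_⟩, ?_⟩
  · intro i hi
    have := (hmeet i hi).choose_spec
    rw [hv]; simp only [dif_pos hi]
    exact ⟨this.1, this.2⟩
  · intro i hi
    rw [hv]; simp only [dif_neg (by omega : ¬ i < bs.length)]
  · intro t ht
    have : flr L t ∈ fs := by
      rw [hfs]
      exact Finset.mem_image.mpr ⟨t, (Set.Finite.mem_toFinset _).mpr ht, rfl⟩
    have : flr L t ∈ bs := by rwa [hbs, Finset.mem_toList]
    obtain ⟨i, hi, hig⟩ := List.mem_iff_getElem.mp this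
    refine ⟨i, by omega, ?_⟩
    rw [List.getD_eq_getElem bs 0 hi, hig]

/-- the downward stratification -/
def Esets (Q : Set (J × ℝ)) (D : ℕ) : ℕ → Set J
  | 0 => univ
  | (j+1) => Esets Q D j \ ⋃ (L : ℕ), ⋃ (bs : List ℤ),
      ⋃ (_ : bs.Nodup ∧ bs.length = D - j), Prod.fst '' Gset Q (Esets Q D j) L bs

lemma Esets_eq {Q : Set (J × ℝ)} {D : ℕ} (hfin : ∀ x : J, (psec Q x).Finite)
    (hbd : ∀ x : J, (psec Q x).ncard ≤ D) :
    ∀ j, j ≤ D → Esets Q D j = {x | (psec Q x).ncard ≤ D - j} := by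
  intro j
  induction j with
  | zero => intro _; ext x; simpa [Esets] using hbd x
  | succ j ih =>
    intro hj
    have hj' : j ≤ D := by omega
    have hE := ih hj'
    set k := D - j with hk
    have hk1 : 1 ≤ k := by omega
    have hstep : D - (j+1) = k - 1 := by omega
    rw [Esets, hE, hstep]
    ext x
    simp only [mem_diff, mem_setOf_eq, mem_iUnion, exists_prop]
    constructor
    · rintro ⟨hle, hnomem⟩
      rcases Nat.lt_or_ge ((psec Q x).ncard) k with h | h
      · omega
      · exfalso
        have heq : (psec Q x).ncard = k := by omega
        obtain ⟨L, bs, v, hnd, hlen, hmem, -⟩ :=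
          mem_Gset_of_ncard_eq hfin (W := {x | (psec Q x).ncard ≤ k}) (by simpa using hle) heq
        exact hnomem ⟨L, bs, ⟨hnd, hlen⟩, ⟨(x, v), hmem, rfl⟩⟩
    · intro hle
      refine ⟨by omega, ?_⟩
      rintro ⟨L, bs, ⟨hnd, hlen⟩, hximg⟩
      obtain ⟨p, hmem, hpx⟩ := hximg
      obtain ⟨x', v⟩ := p
      have hxx : x' = x := hpx
      subst hxx
      have := ncard_ge_of_mem_Gset hfin hnd hmem
      omega

lemma Esets_meas {Q : Set (J × ℝ)} {D : ℕ} (hQ : MeasurableSet Q)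
    (hfin : ∀ x : J, (psec Q x).Finite) (hbd : ∀ x : J, (psec Q x).ncard ≤ D) :
    ∀ j, j ≤ D → MeasurableSet (Esets Q D j) := by
  intro j
  induction j with
  | zero => intro _; exact MeasurableSet.univ
  | succ j ih =>
    intro hj
    have hj' : j ≤ D := by omega
    have hmeas := ih hj'
    rw [Esets]
    refine hmeas.diff ?_
    refine MeasurableSet.iUnion (fun L => MeasurableSet.iUnion (fun bs =>
      MeasurableSet.iUnion (fun hbs => ?_)))
    refine MeasurableSet.image_of_measurable_injOn
      (measurable_Gset hQ hmeas L bs) measurable_fst ?_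
    refine injOn_fst_Gset hfin ?_ hbs.1
    intro x hx
    rw [Esets_eq hfin hbd j hj'] at hx
    calc (psec Q x).ncard ≤ D - j := hx
      _ = bs.length := hbs.2.symm

def Ek (Q : Set (J × ℝ)) (D : ℕ) (k : ℕ) : Set J :=
  if k < D then Esets Q D (D - k) else univ

lemma Ek_meas {Q : Set (J × ℝ)} {D : ℕ} (hQ : MeasurableSet Q)
    (hfin : ∀ x : J, (psec Q x).Finite) (hbd : ∀ x : J, (psec Q x).ncard ≤ D) (k : ℕ) :
    MeasurableSet (Ek Q D k) := by
  unfold Ek; split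
  · exact Esets_meas hQ hfin hbd _ (by omega)
  · exact MeasurableSet.univ

lemma Ek_eq {Q : Set (J × ℝ)} {D : ℕ}
    (hfin : ∀ x : J, (psec Q x).Finite) (hbd : ∀ x : J, (psec Q x).ncard ≤ D) (k : ℕ) :
    Ek Q D k = {x | (psec Q x).ncard ≤ k} := by
  unfold Ek; split
  · rw [Esets_eq hfin hbd _ (by omega)]
    have h : D - (D - k) = k := by omega
    rw [h]
  · ext x; simp only [mem_univ, mem_setOf_eq, true_iff]
    exact le_trans (hbd x) (by omega)

/-- The Luzin–Novikov style covering lemma: a measurable subset of `J × ℝ` with finite,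
uniformly bounded vertical sections is covered by countably many measurable partial
function graphs. -/
lemma exists_cover {Q : Set (J × ℝ)} (hQ : MeasurableSet Q) {D : ℕ}
    (hfin : ∀ x : J, (psec Q x).Finite) (hbd : ∀ x : J, (psec Q x).ncard ≤ D) :
    ∃ (V : ℕ → Set J) (f : ℕ → J → ℝ),
      (∀ n, MeasurableSet (V n)) ∧ (∀ n, Measurable (f n)) ∧
      (∀ n x, x ∈ V n → (x, f n x) ∈ Q) ∧
      (∀ x t, (x, t) ∈ Q → ∃ n, x ∈ V n ∧ f n x = t) := by
  classical
  have perLam : ∀ lam : ℕ × List ℤ × ℕ, ∃ Vf : Set J × (J → ℝ),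
      MeasurableSet Vf.1 ∧ Measurable Vf.2 ∧ (∀ x ∈ Vf.1, (x, Vf.2 x) ∈ Q) ∧
      (∀ x t, (x, t) ∈ Q → lam.2.1.Nodup → lam.2.2 < lam.2.1.length →
        (psec Q x).ncard ≤ lam.2.1.length →
        (∀ j, j < lam.2.1.length → ∃ u, u ∈ psec Q x ∧ flr lam.1 u = lam.2.1.getD j 0) →
        flr lam.1 t = lam.2.1.getD lam.2.2 0 → x ∈ Vf.1 ∧ Vf.2 x = t) := by
    rintro ⟨L, bs, i⟩
    by_cases hgood : bs.Nodup ∧ i < bs.length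
    · obtain ⟨hnd, hi⟩ := hgood
      set W := Ek Q D bs.length with hW
      have hWmeas : MeasurableSet W := Ek_meas hQ hfin hbd _
      have hWeq : W = {x | (psec Q x).ncard ≤ bs.length} := Ek_eq hfin hbd _
      have hWle : ∀ x ∈ W, (psec Q x).ncard ≤ bs.length := fun x hx => by
        rwa [hWeq] at hx
      set G := Gset Q W L bs with hG
      have hGmeas : MeasurableSet G := measurable_Gset hQ hWmeas L bs
      have hGinj : InjOn Prod.fst G := injOn_fst_Gset hfin hWle hnd
      set R : Set (J × ℝ) := (fun p : J × (ℕ → ℝ) => (p.1, p.2 i)) '' G with hR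
      have hRmeas : MeasurableSet R := by
        refine MeasurableSet.image_of_measurable_injOn hGmeas
          (measurable_fst.prodMk ((measurable_pi_apply i).comp measurable_snd)) ?_
        rintro ⟨x, v⟩ hm ⟨x', v'⟩ hm' heq
        simp only [Prod.mk.injEq] at heq
        obtain ⟨rfl, -⟩ := heq
        exact hGinj hm hm' rfl
      have hRinj : InjOn Prod.fst R := by
        rintro ⟨x, t⟩ ⟨⟨x1, v⟩, hv, hveq⟩ ⟨x', t'⟩ ⟨⟨x1', v'⟩, hv', hveq'⟩ heq
        simp only [Prod.mk.injEq] at hveq hveq' heq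
        obtain ⟨rfl, rfl⟩ := hveq
        obtain ⟨rfl, rfl⟩ := hveq'
        subst heq
        have := Gset_section_unique hfin hWle hnd hv hv'
        subst this
        rfl
      obtain ⟨hVmeas, f, hfmeas, hfmem⟩ := exists_selection hRmeas hRinj
      refine ⟨⟨Prod.fst '' R, f⟩, hVmeas, hfmeas, ?_, ?_⟩
      · intro x hx
        obtain ⟨⟨x1, v⟩, hvG, hveq⟩ := hfmem x hx
        simp only [Prod.mk.injEq] at hveq
        obtain ⟨rfl, hfeq⟩ := hveq
        show (x1, f x1) ∈ Q
        rw [← hfeq]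
        exact (hvG.2.1 i hi).1
      · intro x t hxt _ _ hle hmeet hcell
        have hxW : x ∈ W := by rw [hWeq]; exact hle
        set v : ℕ → ℝ := fun m => if h : m < bs.length then (hmeet m h).choose else 0 with hv
        have hvG : (x, v) ∈ G := by
          refine ⟨hxW, ?_, ?_⟩
          · intro m hm
            have := (hmeet m hm).choose_spec
            rw [hv]; simp only [dif_pos hm]
            exact ⟨this.1, this.2⟩
          · intro m hm
            rw [hv]; simp only [dif_neg (by omega : ¬ m < bs.length)]
        have hxV : x ∈ Prod.fst '' R := ⟨(x, v i), ⟨(x, v), hvG, rfl⟩, rfl⟩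
        refine ⟨hxV, ?_⟩
        -- f x and t both lie in the i-th cell of the section
        have hcells := cells_unique (hfinx := hfin x) (hx := hle) (hlen := rfl) hnd hmeet
        obtain ⟨⟨x1, v'⟩, hv'G, hveq⟩ := hfmem x hxV
        simp only [Prod.mk.injEq] at hveq
        obtain ⟨heq1, hfeq⟩ := hveq
        subst heq1
        refine hcells i hi _ t ⟨?_, ?_⟩ ⟨hxt, hcell⟩
        · show f x1 ∈ psec Q x1
          rw [← hfeq]
          exact (hv'G.2.1 i hi).1
        · show flr L (f x1) = bs.getD i 0
          rw [← hfeq]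
          exact (hv'G.2.1 i hi).2
    · refine ⟨⟨∅, fun _ => 0⟩, MeasurableSet.empty, measurable_const, ?_, ?_⟩
      · intro x hx; exact absurd hx (notMem_empty x)
      · intro x t _ hnd hi hle _ _
        exact absurd ⟨hnd, hi⟩ hgood
  choose Vf h1 h2 h3 h4 using perLam
  refine ⟨fun n => (Vf (Denumerable.ofNat _ n)).1, fun n => (Vf (Denumerable.ofNat _ n)).2,
    fun n => h1 _, fun n => h2 _, fun n x hx => h3 _ x hx, ?_⟩
  intro x t hxt
  -- produce the right lambda
  have hxle : (psec Q x).ncard ≤ D := hbd x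
  obtain ⟨L, bs, v, hnd, hlen, hmemG, hcellall⟩ :=
    mem_Gset_of_ncard_eq hfin (W := univ) (mem_univ x) rfl
  obtain ⟨i, hik, hit⟩ := hcellall t hxt
  have hilen : i < bs.length := by omega
  set lam : ℕ × List ℤ × ℕ := (L, bs, i) with hlam
  have hmeet : ∀ j, j < bs.length → ∃ u, u ∈ psec Q x ∧ flr L u = bs.getD j 0 := by
    intro j hj
    exact ⟨v j, (hmemG.2.1 j hj).1, (hmemG.2.1 j hj).2⟩
  have := h4 lam x t hxt hnd hilen (le_of_eq hlen.symm) hmeet hit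
  refine ⟨Encodable.encode lam, ?_, ?_⟩
  · show x ∈ (Vf (Denumerable.ofNat _ (Encodable.encode lam))).1
    rw [Denumerable.ofNat_encode]; exact this.1
  · show (Vf (Denumerable.ofNat _ (Encodable.encode lam))).2 x = t
    rw [Denumerable.ofNat_encode]; exact this.2

-- ===== new material =====

/-- counting tsum of indicators -/
lemma tsum_indicator_count (T : Set ℕ) :
    (∑' k, T.indicator (fun _ => (1:ℝ≥0∞)) k) = if T.Finite then (T.ncard : ℝ≥0∞) else ⊤ := by
  by_cases hf : T.Finite
  · rw [if_pos hf]
    rw [tsum_eq_sum (s := hf.toFinset) (fun b hb => by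
      simp only [Set.Finite.mem_toFinset] at hb
      exact Set.indicator_of_notMem hb (fun _ => (1:ℝ≥0∞)))]
    have : ∀ b ∈ hf.toFinset, T.indicator (fun _ => (1:ℝ≥0∞)) b = 1 := by
      intro b hb
      simp only [Set.Finite.mem_toFinset] at hb
      exact Set.indicator_of_mem hb (fun _ => (1:ℝ≥0∞))
    rw [Finset.sum_congr rfl this, Finset.sum_const, Set.ncard_eq_toFinset_card _ hf]
    simp
  · rw [if_neg hf]
    have hinf : T.Infinite := hf
    have hle : ∀ n : ℕ, (n : ℝ≥0∞) ≤ ∑' k, T.indicator (fun _ => (1:ℝ≥0∞)) k := by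
      intro n
      obtain ⟨t, hts, htc⟩ := hinf.exists_subset_card_eq n
      calc (n : ℝ≥0∞) = ∑ k ∈ t, 1 := by simp [htc]
        _ = ∑ k ∈ t, T.indicator (fun _ => (1:ℝ≥0∞)) k := by
            refine Finset.sum_congr rfl (fun k hk => ?_)
            exact (Set.indicator_of_mem (hts hk) (fun _ => (1:ℝ≥0∞))).symm
        _ ≤ ∑' k, T.indicator (fun _ => (1:ℝ≥0∞)) k := ENNReal.sum_le_tsum t
    by_contra hne
    obtain ⟨n, hn⟩ := ENNReal.exists_nat_gt hne
    exact absurd (hle n) (not_le.mpr hn)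

/-- equality sets of measurable functions into a standard Borel space are measurable -/
lemma meas_eq_set {f g : J → J} (hf : Measurable f) (hg : Measurable g) :
    MeasurableSet {x | f x = g x} := by
  obtain ⟨e, he⟩ := exists_measurableEmbedding_real J
  have : {x | f x = g x} = {x | e (f x) = e (g x)} := by
    ext x; simp only [mem_setOf_eq]
    exact ⟨fun h => by rw [h], fun h => he.injective h⟩
  rw [this]
  exact measurableSet_eq_fun (he.measurable.comp hf) (he.measurable.comp hg)

lemma measurable_invFun [Nonempty J] {e : J → ℝ} (he : MeasurableEmbedding e) :
    Measurable (Function.invFun e) := by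
  intro B hB
  have hrange : MeasurableSet (range e) := he.measurableSet_range
  have hprein : Function.invFun e ⁻¹' B ∩ range e = e '' B := by
    ext t
    constructor
    · rintro ⟨htB, a, rfl⟩
      have h2 : Function.invFun e (e a) ∈ B := htB
      rw [Function.leftInverse_invFun he.injective a] at h2
      exact ⟨a, h2, rfl⟩
    · rintro ⟨a, haB, rfl⟩
      refine ⟨?_, ⟨a, rfl⟩⟩
      show Function.invFun e (e a) ∈ B
      rw [Function.leftInverse_invFun he.injective a]
      exact haB
  have hconst : ∀ t u, t ∉ range e → u ∉ range e →
      Function.invFun e t = Function.invFun e u := by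
    intro t u ht hu
    unfold Function.invFun
    rw [dif_neg (by simpa [Set.mem_range] using ht),
      dif_neg (by simpa [Set.mem_range] using hu)]
  by_cases hc : ∃ t, t ∉ range e ∧ Function.invFun e t ∈ B
  · obtain ⟨t0, ht0, ht0B⟩ := hc
    have : Function.invFun e ⁻¹' B = e '' B ∪ (range e)ᶜ := by
      apply Subset.antisymm
      · intro t ht
        by_cases htr : t ∈ range e
        · exact Or.inl (hprein ▸ ⟨ht, htr⟩)
        · exact Or.inr htr
      · rintro t (ht | ht)
        · rw [← hprein] at ht
          exact ht.1
        · show Function.invFun e t ∈ B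
          rw [hconst t t0 ht ht0]
          exact ht0B
    rw [this]
    exact (he.measurableSet_image.mpr hB).union hrange.compl
  · push_neg at hc
    have : Function.invFun e ⁻¹' B = e '' B := by
      apply Subset.antisymm
      · intro t ht
        by_cases htr : t ∈ range e
        · rw [← hprein]
          exact ⟨ht, htr⟩
        · exact absurd ht (hc t htr)
      · intro t ht
        rw [← hprein] at ht
        exact ht.1
    rw [this]
    exact he.measurableSet_image.mpr hB

variable {G : Graphing J}

/-- a disjointified countable measurable family of partial neighbor maps covering all edges -/
structure NbrFam (G : Graphing J) where
  W : ℕ → Set J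
  h : ℕ → J → J
  measW : ∀ n, MeasurableSet (W n)
  meash : ∀ n, Measurable (h n)
  edge : ∀ n x, x ∈ W n → G.E x (h n x)
  cover : ∀ x y, G.E x y → ∃ n, x ∈ W n ∧ h n x = y
  uniq : ∀ n m x, x ∈ W n → x ∈ W m → h n x = h m x → n = m

lemma exists_nbrFam (G : Graphing J) [Nonempty J] : Nonempty (NbrFam G) := by
  obtain ⟨e, he⟩ := exists_measurableEmbedding_real J
  set Q : Set (J × ℝ) := (fun p : J × J => (p.1, e p.2)) '' {p : J × J | G.E p.1 p.2} with hQdef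
  have hQm : MeasurableSet Q :=
    (MeasurableEmbedding.id.prodMap he).measurableSet_image.mpr G.measE
  have hsec : ∀ x, psec Q x = e '' {y | G.E x y} := by
    intro x
    ext t
    constructor
    · rintro ⟨⟨a, b⟩, hab, heq⟩
      simp only [Prod.mk.injEq] at heq
      obtain ⟨rfl, rfl⟩ := heq
      exact ⟨b, hab, rfl⟩
    · rintro ⟨y, hy, rfl⟩
      exact ⟨(x, y), hy, rfl⟩
  have hfin : ∀ x, (psec Q x).Finite := fun x => (hsec x) ▸ (G.degFin x).image e
  have hbd : ∀ x, (psec Q x).ncard ≤ G.D := by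
    intro x
    rw [hsec x, Set.ncard_image_of_injective _ he.injective]
    exact G.degBound x
  obtain ⟨V, fR, hVm, hfRm, hgraph, hcov⟩ := exists_cover hQm hfin hbd
  set nb : ℕ → J → J := fun n => Function.invFun e ∘ fR n with hnb
  have hnbm : ∀ n, Measurable (nb n) := fun n => (measurable_invFun he).comp (hfRm n)
  have hedge : ∀ n x, x ∈ V n → G.E x (nb n x) ∧ e (nb n x) = fR n x := by
    intro n x hx
    obtain ⟨⟨a, b⟩, hab, heq⟩ := hgraph n x hx
    simp only [Prod.mk.injEq] at heq
    obtain ⟨rfl, hfb⟩ := heq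
    have : nb n a = b := by
      rw [hnb]; simp only [comp_apply, ← hfb]
      exact Function.leftInverse_invFun he.injective b
    rw [this]
    exact ⟨hab, by rw [← hfb]⟩
  have hcov' : ∀ x y, G.E x y → ∃ n, x ∈ V n ∧ nb n x = y := by
    intro x y hxy
    obtain ⟨n, hn, hfn⟩ := hcov x (e y) ⟨(x, y), hxy, rfl⟩
    refine ⟨n, hn, ?_⟩
    rw [hnb]; simp only [comp_apply, hfn]
    exact Function.leftInverse_invFun he.injective y
  -- disjointify
  classical
  set W : ℕ → Set J := fun n =>
    V n \ ⋃ (m : ℕ), ⋃ (_ : m < n), {x ∈ V m | nb m x = nb n x} with hW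
  have hWm : ∀ n, MeasurableSet (W n) := by
    intro n
    refine (hVm n).diff ?_
    refine MeasurableSet.iUnion (fun m => MeasurableSet.iUnion (fun _ => ?_))
    have : {x | x ∈ V m ∧ nb m x = nb n x} = V m ∩ {x | nb m x = nb n x} := rfl
    rw [this]
    exact (hVm m).inter (meas_eq_set (hnbm m) (hnbm n))
  refine ⟨⟨W, nb, hWm, hnbm, ?_, ?_, ?_⟩⟩
  · intro n x hx
    exact (hedge n x hx.1).1
  · intro x y hxy
    have hne : ∃ n, x ∈ V n ∧ nb n x = y := hcov' x y hxy
    refine ⟨Nat.find hne, ⟨(Nat.find_spec hne).1, ?_⟩, (Nat.find_spec hne).2⟩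
    intro hbad
    simp only [mem_iUnion] at hbad
    obtain ⟨m, hlt, hxm, hval⟩ := hbad
    exact Nat.find_min hne hlt ⟨hxm, by rw [hval, (Nat.find_spec hne).2]⟩
  · intro n m x hxn hxm hval
    rcases Nat.lt_trichotomy n m with hlt | heq | hgt
    · exfalso
      exact hxm.2 (mem_iUnion.mpr ⟨n, mem_iUnion.mpr ⟨hlt, ⟨hxn.1, hval⟩⟩⟩)
    · exact heq
    · exfalso
      exact hxn.2 (mem_iUnion.mpr ⟨m, mem_iUnion.mpr ⟨hgt, ⟨hxm.1, hval.symm⟩⟩⟩)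

namespace NbrFam

variable [Nonempty J] (F : NbrFam G)

/-- the pairing sets: `x ∈ A n m` iff the `n`-th neighbor map is defined at `x` and its
inverse at the endpoint is the `m`-th neighbor map. -/
def A (n m : ℕ) : Set J := {x | x ∈ F.W n ∧ F.h n x ∈ F.W m ∧ F.h m (F.h n x) = x}

lemma measA (n m : ℕ) : MeasurableSet (F.A n m) := by
  have : F.A n m = F.W n ∩ ((F.h n) ⁻¹' (F.W m)) ∩ {x | F.h m (F.h n x) = x} := by
    ext x; simp only [A, mem_setOf_eq, mem_inter_iff, mem_preimage]; tauto
  rw [this]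
  exact (((F.measW n).inter ((F.meash n) (F.measW m))).inter
    (meas_eq_set ((F.meash m).comp (F.meash n)) measurable_id))

lemma mapsA {n m : ℕ} {x : J} (hx : x ∈ F.A n m) : F.h n x ∈ F.A m n := by
  obtain ⟨h1, h2, h3⟩ := hx
  exact ⟨h2, by rw [h3]; exact h1, by rw [h3]⟩

lemma A_iUnion (n : ℕ) : ⋃ m, F.A n m = F.W n := by
  apply Subset.antisymm
  · intro x hx
    obtain ⟨m, hm⟩ := mem_iUnion.mp hx
    exact hm.1
  · intro x hx
    have hedge : G.E (F.h n x) x := G.symm _ _ (F.edge n x hx)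
    obtain ⟨m, hm, hmv⟩ := F.cover _ _ hedge
    exact mem_iUnion.mpr ⟨m, hx, hm, hmv⟩

lemma A_disj {n m m' : ℕ} {x : J} (h1 : x ∈ F.A n m) (h2 : x ∈ F.A n m') : m = m' :=
  F.uniq m m' (F.h n x) h1.2.1 h2.2.1 (by rw [h1.2.2, h2.2.2])

lemma A_uniq1 {n m n' m' : ℕ} {x : J} (h1 : x ∈ F.A n m) (h2 : x ∈ F.A n' m')
    (hval : F.h n x = F.h n' x) : n = n' ∧ m = m' := by
  have hn : n = n' := F.uniq n n' x h1.1 h2.1 hval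
  subst hn
  exact ⟨rfl, F.A_disj h1 h2⟩

/-- counting neighbors in `B` -/
def dcnt (B : Set J) : J → ℝ≥0∞ :=
  fun x => ∑' n, (F.W n ∩ (F.h n) ⁻¹' B).indicator (fun _ => (1:ℝ≥0∞)) x

lemma dcnt_meas {B : Set J} (hB : MeasurableSet B) : Measurable (F.dcnt B) :=
  Measurable.ennreal_tsum (fun n =>
    measurable_const.indicator ((F.measW n).inter ((F.meash n) hB)))

lemma dcnt_eq (B : Set J) (x : J) :
    F.dcnt B x = (({y ∈ B | G.E x y}).ncard : ℝ≥0∞) := by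
  unfold dcnt
  have hpt : ∀ n, (F.W n ∩ (F.h n) ⁻¹' B).indicator (fun _ => (1:ℝ≥0∞)) x =
      ({n | x ∈ F.W n ∧ F.h n x ∈ B}).indicator (fun _ => (1:ℝ≥0∞)) n := by
    intro n
    by_cases hn : x ∈ F.W n ∧ F.h n x ∈ B
    · rw [Set.indicator_of_mem (by exact ⟨hn.1, hn.2⟩) _,
        Set.indicator_of_mem (by exact hn) _]
    · rw [Set.indicator_of_notMem (by exact fun hc => hn ⟨hc.1, hc.2⟩) _,
        Set.indicator_of_notMem (by exact hn) _]
  rw [tsum_congr hpt, tsum_indicator_count]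
  set T := {n | x ∈ F.W n ∧ F.h n x ∈ B} with hT
  have himg : (fun n => F.h n x) '' T = {y ∈ B | G.E x y} := by
    ext y
    constructor
    · rintro ⟨n, ⟨hn, hnB⟩, rfl⟩
      exact ⟨hnB, F.edge n x hn⟩
    · rintro ⟨hyB, hyE⟩
      obtain ⟨n, hn, rfl⟩ := F.cover x y hyE
      exact ⟨n, ⟨hn, hyB⟩, rfl⟩
  have hinj : InjOn (fun n => F.h n x) T := by
    intro n hn n' hn' hval
    exact F.uniq n n' x hn.1 hn'.1 hval
  have hfin2 : {y ∈ B | G.E x y}.Finite := (G.degFin x).subset (fun y hy => hy.2)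
  have hfinT : T.Finite := by
    have := Set.Finite.of_finite_image (himg ▸ hfin2) hinj
    exact this
  rw [if_pos hfinT, ← himg, Set.ncard_image_of_injOn hinj]

def graphMap (n : ℕ) : J → J × J := fun x => (x, F.h n x)

lemma measurable_graphMap (n : ℕ) : Measurable (F.graphMap n) :=
  measurable_id.prodMk (F.meash n)

/-- the edge measure -/
def eta : Measure (J × J) :=
  Measure.sum (fun p : ℕ × ℕ => Measure.map (F.graphMap p.1) (G.μ.restrict (F.A p.1 p.2)))

lemma eta_apply {T : Set (J × J)} (hT : MeasurableSet T) :
    F.eta T = ∑' p : ℕ × ℕ, G.μ ((F.graphMap p.1) ⁻¹' T ∩ F.A p.1 p.2) := by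
  rw [eta, Measure.sum_apply _ hT]
  refine tsum_congr (fun p => ?_)
  rw [Measure.map_apply (F.measurable_graphMap p.1) hT,
    Measure.restrict_apply ((F.measurable_graphMap p.1) hT)]

lemma lint_dcnt {A B : Set J} (hA : MeasurableSet A) (hB : MeasurableSet B) :
    ∫⁻ x in A, F.dcnt B x ∂G.μ = ∑' n, G.μ ((F.W n ∩ (F.h n) ⁻¹' B) ∩ A) := by
  unfold dcnt
  rw [lintegral_tsum (fun n => (measurable_const.indicator
    ((F.measW n).inter ((F.meash n) hB))).aemeasurable)]
  refine tsum_congr (fun n => ?_)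
  rw [lintegral_indicator ((F.measW n).inter ((F.meash n) hB)),
    setLIntegral_one, Measure.restrict_apply ((F.measW n).inter ((F.meash n) hB))]

lemma eta_rect {A B : Set J} (hA : MeasurableSet A) (hB : MeasurableSet B) :
    F.eta (A ×ˢ B) = ∫⁻ x in A, F.dcnt B x ∂G.μ := by
  rw [F.eta_apply ((hA.prod hB : MeasurableSet (A ×ˢ B)))]
  rw [F.lint_dcnt hA hB]
  have hprd := ENNReal.tsum_prod
    (f := fun n m => G.μ ((F.graphMap n) ⁻¹' (A ×ˢ B) ∩ F.A n m))
  rw [hprd]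
  refine tsum_congr (fun n => ?_)
  have hsets : ∀ m, (F.graphMap n) ⁻¹' (A ×ˢ B) ∩ F.A n m =
      ((A ∩ (F.h n) ⁻¹' B) ∩ F.A n m) := by
    intro m
    ext x
    simp only [graphMap, mem_inter_iff, mem_preimage, mem_prod]
    try tauto
  calc (∑' m, G.μ ((F.graphMap n) ⁻¹' (A ×ˢ B) ∩ F.A n m))
      = ∑' m, G.μ ((A ∩ (F.h n) ⁻¹' B) ∩ F.A n m) := by
        exact tsum_congr (fun m => by rw [hsets m])
    _ = G.μ (⋃ m, (A ∩ (F.h n) ⁻¹' B) ∩ F.A n m) := by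
        rw [measure_iUnion ?_ (fun m => (hA.inter ((F.meash n) hB)).inter (F.measA n m))]
        intro m m' hmm'
        simp only [Function.onFun]
        refine Set.disjoint_left.mpr (fun x hx hx' => ?_)
        exact hmm' (F.A_disj hx.2 hx'.2)
    _ = G.μ ((F.W n ∩ (F.h n) ⁻¹' B) ∩ A) := by
        rw [← Set.inter_iUnion, F.A_iUnion n]
        congr 1
        ext x
        simp only [mem_inter_iff, mem_preimage]
        tauto

lemma isFiniteMeasure_eta : IsFiniteMeasure F.eta := by
  constructor
  haveI := G.prob
  have : (univ : Set (J × J)) = (univ : Set J) ×ˢ (univ : Set J) := by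
    rw [Set.univ_prod_univ]
  rw [this, F.eta_rect MeasurableSet.univ MeasurableSet.univ]
  calc ∫⁻ x in univ, F.dcnt univ x ∂G.μ ≤ ∫⁻ _ in univ, (G.D : ℝ≥0∞) ∂G.μ := by
        refine lintegral_mono (fun x => ?_)
        rw [F.dcnt_eq]
        have h1 : ({y ∈ univ | G.E x y}).ncard ≤ G.D := by
          refine le_trans (le_of_eq ?_) (G.degBound x)
          congr 1
          simp
        exact (Nat.cast_le (α := ℝ≥0∞)).mpr h1
    _ < ⊤ := by
        rw [setLIntegral_const]
        exact ENNReal.mul_lt_top (ENNReal.natCast_lt_top _) (measure_lt_top _ _)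

lemma lint_dcnt_eq_mp {A B : Set J} (hA : MeasurableSet A) (hB : MeasurableSet B) :
    ∫⁻ x in A, F.dcnt B x ∂G.μ =
      ENNReal.ofReal (∫ x in A, (({y ∈ B | G.E x y}).ncard : ℝ) ∂G.μ) := by
  haveI := G.prob
  have hmeasfn : Measurable (fun x => (({y ∈ B | G.E x y}).ncard : ℝ)) := by
    have heq : (fun x => (({y ∈ B | G.E x y}).ncard : ℝ)) =
        fun x => (F.dcnt B x).toReal := by
      funext x
      rw [F.dcnt_eq]
      simp
    rw [heq]
    exact (F.dcnt_meas hB).ennreal_toReal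
  have hbound : ∀ x, (({y ∈ B | G.E x y}).ncard : ℝ) ≤ (G.D : ℝ) := by
    intro x
    have h1 : ({y ∈ B | G.E x y}).ncard ≤ G.D :=
      le_trans (Set.ncard_le_ncard (fun y hy => hy.2) (G.degFin x)) (G.degBound x)
    exact_mod_cast h1
  have hint : Integrable (fun x => (({y ∈ B | G.E x y}).ncard : ℝ)) (G.μ.restrict A) := by
    refine (integrable_const (G.D : ℝ)).mono' hmeasfn.aestronglyMeasurable ?_
    refine ae_of_all _ (fun x => ?_)
    rw [Real.norm_eq_abs, abs_of_nonneg (by positivity)]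
    exact hbound x
  rw [MeasureTheory.ofReal_integral_eq_lintegral_ofReal hint
    (ae_of_all _ (fun x => by positivity))]
  refine lintegral_congr (fun x => ?_)
  rw [F.dcnt_eq, ENNReal.ofReal_natCast]

lemma eta_symm : F.eta = F.eta.map Prod.swap := by
  haveI := F.isFiniteMeasure_eta
  refine MeasureTheory.ext_of_generate_finite _ generateFrom_prod.symm isPiSystem_prod ?_ ?_
  · rintro s ⟨A, hA, B, hB, rfl⟩
    simp only [mem_setOf_eq] at hA hB
    rw [Measure.map_apply measurable_swap (hA.prod hB), Set.preimage_swap_prod,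
      F.eta_rect hA hB, F.eta_rect hB hA, F.lint_dcnt_eq_mp hA hB, F.lint_dcnt_eq_mp hB hA,
      G.mp A B hA hB]
  · rw [Measure.map_apply measurable_swap MeasurableSet.univ]
    simp

/-- the key measure-preservation property of the partial edge bijections -/
lemma pres (n m : ℕ) {S : Set J} (hS : MeasurableSet S) :
    G.μ (S ∩ F.A n m) = G.μ ((F.h m) ⁻¹' S ∩ F.A m n) := by
  set T := (F.graphMap n) '' (S ∩ F.A n m) with hTdef
  have hTm : MeasurableSet T := by
    refine MeasurableSet.image_of_measurable_injOn (hS.inter (F.measA n m))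
      (F.measurable_graphMap n) ?_
    have hinj : Injective (F.graphMap n) := fun a b h => congrArg Prod.fst h
    exact hinj.injOn
  have h1 : F.eta T = G.μ (S ∩ F.A n m) := by
    rw [F.eta_apply hTm]
    rw [tsum_eq_single (n, m) ?_]
    · congr 1
      ext x
      simp only [mem_inter_iff, mem_preimage]
      constructor
      · rintro ⟨⟨x', hx', heq⟩, hxA⟩
        have hx1 : x' = x := congrArg Prod.fst heq
        subst hx1
        exact hx'
      · intro hx
        exact ⟨⟨x, hx, rfl⟩, hx.2⟩
    · rintro ⟨n', m'⟩ hne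
      have hempty : (F.graphMap n') ⁻¹' T ∩ F.A n' m' = ∅ := by
        rw [Set.eq_empty_iff_forall_notMem]
        rintro x ⟨hxT, hxA⟩
        obtain ⟨x', hx', heq⟩ := hxT
        have hx1 : x' = x := congrArg Prod.fst heq
        subst hx1
        have hval : F.h n x' = F.h n' x' := congrArg Prod.snd heq
        obtain ⟨h1, h2⟩ := F.A_uniq1 hx'.2 hxA hval
        exact hne (by simp [← h1, ← h2])
      rw [hempty, measure_empty]
  have h2 : F.eta (Prod.swap ⁻¹' T) = G.μ ((F.h m) ⁻¹' S ∩ F.A m n) := by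
    rw [F.eta_apply (measurable_swap hTm)]
    rw [tsum_eq_single (m, n) ?_]
    · congr 1
      ext x
      simp only [mem_inter_iff, mem_preimage]
      constructor
      · rintro ⟨⟨x', hx', heq⟩, hxA⟩
        simp only [graphMap, Prod.swap, Prod.mk.injEq] at heq
        obtain ⟨hx1, hx2⟩ := heq
        exact ⟨by rw [← hx1]; exact hx'.1, hxA⟩
      · rintro ⟨hmxS, hxA⟩
        refine ⟨⟨F.h m x, ⟨hmxS, F.mapsA hxA⟩, ?_⟩, hxA⟩
        simp only [graphMap, Prod.swap, Prod.mk.injEq]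
        exact ⟨trivial, hxA.2.2⟩
    · rintro ⟨n', m'⟩ hne
      have hempty : (F.graphMap n') ⁻¹' (Prod.swap ⁻¹' T) ∩ F.A n' m' = ∅ := by
        rw [Set.eq_empty_iff_forall_notMem]
        rintro x ⟨hxT, hxA⟩
        obtain ⟨x', hx', heq⟩ := hxT
        simp only [graphMap, Prod.swap, Prod.mk.injEq] at heq
        obtain ⟨hx1, hx2⟩ := heq
        obtain ⟨hx'S, hx'A⟩ := hx'
        have hxWm : x ∈ F.W m := by rw [← hx2]; exact hx'A.2.1
        have hmx : F.h m x = x' := by rw [← hx2]; exact hx'A.2.2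
        have hn'm : n' = m := F.uniq n' m x hxA.1 hxWm (by rw [hmx, ← hx1])
        have hxA' : x ∈ F.A m m' := hn'm ▸ hxA
        have hxAmn : x ∈ F.A m n := by
          refine ⟨hxWm, ?_, ?_⟩
          · rw [hmx]; exact hx'A.1
          · rw [hmx, hx2]
        have hm'n : m' = n := F.A_disj hxA' hxAmn
        exact hne (by rw [hn'm, hm'n])
      rw [hempty, measure_empty]
  calc G.μ (S ∩ F.A n m) = F.eta T := h1.symm
    _ = (F.eta.map Prod.swap) T := by rw [← F.eta_symm]
    _ = F.eta (Prod.swap ⁻¹' T) := Measure.map_apply measurable_swap hTm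
    _ = G.μ ((F.h m) ⁻¹' S ∩ F.A m n) := h2

end NbrFam

/-- measurable partial bijections preserving the measure and moving points within their
connected component -/
structure PB (G : Graphing J) where
  f : J → J
  g : J → J
  dom : Set J
  ran : Set J
  mf : Measurable f
  mg : Measurable g
  md : MeasurableSet dom
  mr : MeasurableSet ran
  mapsf : ∀ x ∈ dom, f x ∈ ran
  mapsg : ∀ y ∈ ran, g y ∈ dom
  gf : ∀ x ∈ dom, g (f x) = x
  fg : ∀ y ∈ ran, f (g y) = y
  pres : ∀ S : Set J, MeasurableSet S → G.μ (S ∩ dom) = G.μ (g ⁻¹' S ∩ ran)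
  rel : ∀ x ∈ dom, Relation.ReflTransGen G.E x (f x)

namespace PB

def ident (G : Graphing J) : PB G where
  f := id
  g := id
  dom := univ
  ran := univ
  mf := measurable_id
  mg := measurable_id
  md := MeasurableSet.univ
  mr := MeasurableSet.univ
  mapsf := fun x _ => mem_univ x
  mapsg := fun y _ => mem_univ y
  gf := fun x _ => rfl
  fg := fun y _ => rfl
  pres := fun S _ => by simp
  rel := fun x _ => Relation.ReflTransGen.refl

variable [Nonempty J]

def edge (F : NbrFam G) (n m : ℕ) : PB G where
  f := F.h n
  g := F.h m
  dom := F.A n m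
  ran := F.A m n
  mf := F.meash n
  mg := F.meash m
  md := F.measA n m
  mr := F.measA m n
  mapsf := fun x hx => F.mapsA hx
  mapsg := fun y hy => F.mapsA hy
  gf := fun x hx => hx.2.2
  fg := fun y hy => hy.2.2
  pres := fun S hS => F.pres n m hS
  rel := fun x hx => Relation.ReflTransGen.single (F.edge n x hx.1)

def comp (p q : PB G) : PB G where
  f := q.f ∘ p.f
  g := p.g ∘ q.g
  dom := p.dom ∩ p.f ⁻¹' q.dom
  ran := q.ran ∩ q.g ⁻¹' p.ran
  mf := q.mf.comp p.mf
  mg := p.mg.comp q.mg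
  md := p.md.inter (p.mf q.md)
  mr := q.mr.inter (q.mg p.mr)
  mapsf := fun x hx => by
    refine ⟨q.mapsf _ hx.2, ?_⟩
    show q.g (q.f (p.f x)) ∈ p.ran
    rw [q.gf _ hx.2]
    exact p.mapsf _ hx.1
  mapsg := fun y hy => by
    refine ⟨p.mapsg _ hy.2, ?_⟩
    show p.f (p.g (q.g y)) ∈ q.dom
    rw [p.fg _ hy.2]
    exact q.mapsg _ hy.1
  gf := fun x hx => by
    show p.g (q.g (q.f (p.f x))) = x
    rw [q.gf _ hx.2, p.gf _ hx.1]
  fg := fun y hy => by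
    show q.f (p.f (p.g (q.g y))) = y
    rw [p.fg _ hy.2, q.fg _ hy.1]
  pres := fun S hS => by
    have h1 : S ∩ (p.dom ∩ p.f ⁻¹' q.dom) = (S ∩ p.f ⁻¹' q.dom) ∩ p.dom := by
      ext x; simp only [mem_inter_iff, mem_preimage]; tauto
    rw [h1, p.pres _ (hS.inter (p.mf q.md))]
    have h2 : p.g ⁻¹' (S ∩ p.f ⁻¹' q.dom) ∩ p.ran = (p.g ⁻¹' S ∩ p.ran) ∩ q.dom := by
      ext y
      simp only [mem_inter_iff, mem_preimage]
      constructor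
      · rintro ⟨⟨h3, h4⟩, h5⟩
        rw [p.fg _ h5] at h4
        exact ⟨⟨h3, h5⟩, h4⟩
      · rintro ⟨⟨h3, h5⟩, h4⟩
        exact ⟨⟨h3, by rw [p.fg _ h5]; exact h4⟩, h5⟩
    rw [h2, q.pres _ ((p.mg hS).inter p.mr)]
    congr 1
    ext z
    simp only [mem_inter_iff, mem_preimage, comp_apply]
    tauto
  rel := fun x hx =>
    Relation.ReflTransGen.trans (p.rel x hx.1) (q.rel _ hx.2)

/-- the composite map along a word of pairing indices -/
def word (F : NbrFam G) : List (ℕ × ℕ) → PB G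
  | [] => ident G
  | (nm :: w) => comp (edge F nm.1 nm.2) (word F w)

lemma word_cover (F : NbrFam G) {x y : J} (hxy : Relation.ReflTransGen G.E x y) :
    ∃ w : List (ℕ × ℕ), x ∈ (word F w).dom ∧ (word F w).f x = y := by
  induction hxy using Relation.ReflTransGen.head_induction_on with
  | refl => exact ⟨[], mem_univ x, rfl⟩
  | @head a c hedge htail ih =>
    obtain ⟨w, hw, hwf⟩ := ih
    obtain ⟨n, hn, hnv⟩ := F.cover _ _ hedge
    have hnA : ∃ m, a ∈ F.A n m := by
      have : a ∈ ⋃ m, F.A n m := by rw [F.A_iUnion n]; exact hn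
      exact mem_iUnion.mp this
    obtain ⟨m, hm⟩ := hnA
    refine ⟨(n, m) :: w, ⟨hm, ?_⟩, ?_⟩
    · show F.h n a ∈ (word F w).dom
      rw [hnv]; exact hw
    · show (word F w).f (F.h n a) = y
      rw [hnv]; exact hwf

end PB

/-- a countable family of measure preserving measurable partial bijections covering
the connectivity relation -/
structure RFam (G : Graphing J) where
  p : ℕ → PB G
  cover : ∀ x y : J, Relation.ReflTransGen G.E x y → ∃ n, x ∈ (p n).dom ∧ (p n).f x = y

lemma exists_rfam (G : Graphing J) [Nonempty J] : Nonempty (RFam G) := by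
  obtain ⟨F⟩ := exists_nbrFam G
  refine ⟨⟨fun n => PB.word F (Denumerable.ofNat (List (ℕ × ℕ)) n), ?_⟩⟩
  intro x y hxy
  obtain ⟨w, hw, hwf⟩ := PB.word_cover F hxy
  refine ⟨Encodable.encode w, ?_, ?_⟩
  · show x ∈ (PB.word F (Denumerable.ofNat _ (Encodable.encode w))).dom
    rw [Denumerable.ofNat_encode]; exact hw
  · show (PB.word F (Denumerable.ofNat _ (Encodable.encode w))).f x = y
    rw [Denumerable.ofNat_encode]; exact hwf

section Final

variable [Nonempty J] {G : Graphing J} (R : RFam G)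

/-- the connectivity relation -/
def rtg (G : Graphing J) : J → J → Prop := Relation.ReflTransGen G.E

lemma rtg_symm {x y : J} (h : rtg G x y) : rtg G y x :=
  @Std.Symm.symm _ _ (@Relation.ReflTransGen.symmetric _ _ ⟨fun a b hab => G.symm a b hab⟩) _ _ h

/-- the connectivity class -/
def kls (G : Graphing J) (x : J) : Set J := {y | rtg G x y}

lemma mem_kls_self (x : J) : x ∈ kls G x := Relation.ReflTransGen.refl

lemma kls_eq {x y : J} (h : rtg G x y) : kls G x = kls G y := by
  ext z
  exact ⟨fun hz => Relation.ReflTransGen.trans (rtg_symm h) hz,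
    fun hz => Relation.ReflTransGen.trans h hz⟩

namespace RFam

/-- disjointified domains: `x ∈ U' n` iff `n` is the least index realizing the value -/
def U' (n : ℕ) : Set J :=
  (R.p n).dom \ ⋃ (m : ℕ), ⋃ (_ : m < n), {x ∈ (R.p m).dom | (R.p m).f x = (R.p n).f x}

lemma measU' (n : ℕ) : MeasurableSet (R.U' n) := by
  refine (R.p n).md.diff ?_
  refine MeasurableSet.iUnion (fun m => MeasurableSet.iUnion (fun _ => ?_))
  have : {x | x ∈ (R.p m).dom ∧ (R.p m).f x = (R.p n).f x} =
      (R.p m).dom ∩ {x | (R.p m).f x = (R.p n).f x} := rfl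
  rw [this]
  exact (R.p m).md.inter (meas_eq_set (R.p m).mf (R.p n).mf)

lemma exists_U' {x y : J} (h : rtg G x y) : ∃ n, x ∈ R.U' n ∧ (R.p n).f x = y := by
  have hne : ∃ n, x ∈ (R.p n).dom ∧ (R.p n).f x = y := R.cover x y h
  refine ⟨Nat.find hne, ⟨(Nat.find_spec hne).1, ?_⟩, (Nat.find_spec hne).2⟩
  intro hbad
  simp only [mem_iUnion] at hbad
  obtain ⟨m, hlt, hxm, hval⟩ := hbad
  exact Nat.find_min hne hlt ⟨hxm, by rw [hval, (Nat.find_spec hne).2]⟩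

lemma uniq_U' {n m : ℕ} {x : J} (hn : x ∈ R.U' n) (hm : x ∈ R.U' m)
    (hval : (R.p n).f x = (R.p m).f x) : n = m := by
  rcases Nat.lt_trichotomy n m with hlt | heq | hgt
  · exfalso
    apply hm.2
    simp only [mem_iUnion]
    exact ⟨n, hlt, hn.1, hval⟩
  · exact heq
  · exfalso
    apply hn.2
    simp only [mem_iUnion]
    exact ⟨m, hgt, hm.1, hval.symm⟩

/-- counting class elements whose representative lands in `B` -/
def cnt (B : Set J) : J → ℝ≥0∞ :=
  fun x => ∑' n, (R.U' n ∩ (R.p n).f ⁻¹' B).indicator (fun _ => (1:ℝ≥0∞)) x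

lemma cnt_meas {B : Set J} (hB : MeasurableSet B) : Measurable (R.cnt B) :=
  Measurable.ennreal_tsum (fun n =>
    measurable_const.indicator ((R.measU' n).inter ((R.p n).mf hB)))

lemma cnt_eq (B : Set J) (x : J) :
    R.cnt B x = if (kls G x ∩ B).Finite then ((kls G x ∩ B).ncard : ℝ≥0∞) else ⊤ := by
  unfold cnt
  have hpt : ∀ n, (R.U' n ∩ (R.p n).f ⁻¹' B).indicator (fun _ => (1:ℝ≥0∞)) x =
      ({n | x ∈ R.U' n ∧ (R.p n).f x ∈ B}).indicator (fun _ => (1:ℝ≥0∞)) n := by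
    intro n
    by_cases hn : x ∈ R.U' n ∧ (R.p n).f x ∈ B
    · rw [Set.indicator_of_mem (by exact ⟨hn.1, hn.2⟩) (fun _ => (1:ℝ≥0∞)),
        Set.indicator_of_mem (by exact hn) (fun _ => (1:ℝ≥0∞))]
    · rw [Set.indicator_of_notMem (by exact fun hc => hn ⟨hc.1, hc.2⟩) (fun _ => (1:ℝ≥0∞)),
        Set.indicator_of_notMem (by exact hn) (fun _ => (1:ℝ≥0∞))]
  rw [tsum_congr hpt, tsum_indicator_count]
  set T := {n | x ∈ R.U' n ∧ (R.p n).f x ∈ B} with hT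
  have himg : (fun n => (R.p n).f x) '' T = kls G x ∩ B := by
    ext y
    constructor
    · rintro ⟨n, ⟨hn, hnB⟩, rfl⟩
      exact ⟨(R.p n).rel x hn.1, hnB⟩
    · rintro ⟨hyk, hyB⟩
      obtain ⟨n, hn, hnv⟩ := R.exists_U' hyk
      exact ⟨n, ⟨hn, by rw [hnv]; exact hyB⟩, hnv⟩
  have hinj : InjOn (fun n => (R.p n).f x) T := by
    intro n hn n' hn' hval
    exact R.uniq_U' hn.1 hn'.1 hval
  have hTfin : T.Finite ↔ (kls G x ∩ B).Finite := by
    constructor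
    · intro hf
      rw [← himg]
      exact hf.image _
    · intro hf
      exact Set.Finite.of_finite_image (himg ▸ hf) hinj
  by_cases hq : (kls G x ∩ B).Finite
  · rw [if_pos (hTfin.mpr hq), if_pos hq, ← himg, Set.ncard_image_of_injOn hinj]
  · rw [if_neg (fun hc => hq (hTfin.mp hc)), if_neg hq]

/-- total class count -/
def cls_cnt : J → ℝ≥0∞ := R.cnt univ

lemma cls_cnt_eq (x : J) :
    R.cls_cnt x = if (kls G x).Finite then ((kls G x).ncard : ℝ≥0∞) else ⊤ := by
  rw [cls_cnt, cnt_eq]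
  simp

lemma cls_cnt_meas : Measurable R.cls_cnt := R.cnt_meas MeasurableSet.univ

def Fin : Set J := {x | R.cls_cnt x ≠ ⊤}

lemma measFin : MeasurableSet R.Fin := by
  have : R.Fin = R.cls_cnt ⁻¹' {⊤}ᶜ := rfl
  rw [this]
  exact R.cls_cnt_meas (measurableSet_singleton _).compl

lemma mem_Fin_iff (x : J) : x ∈ R.Fin ↔ (kls G x).Finite := by
  unfold Fin
  rw [mem_setOf_eq, R.cls_cnt_eq]
  by_cases h : (kls G x).Finite
  · simp [h]
  · simp [h]

lemma Fin_inv {x y : J} (h : rtg G x y) : x ∈ R.Fin ↔ y ∈ R.Fin := by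
  rw [R.mem_Fin_iff, R.mem_Fin_iff, kls_eq h]

lemma cls_cnt_inv {x y : J} (h : rtg G x y) : R.cls_cnt x = R.cls_cnt y := by
  rw [R.cls_cnt_eq, R.cls_cnt_eq, kls_eq h]

lemma cls_cnt_ge_one (x : J) : 1 ≤ R.cls_cnt x := by
  rw [R.cls_cnt_eq]
  split
  · have h1 : 1 ≤ (kls G x).ncard := by
      rw [Nat.one_le_iff_ne_zero]
      intro hc
      have := (Set.ncard_eq_zero (by assumption)).mp hc
      exact absurd (this ▸ mem_kls_self x) (notMem_empty x)
    exact_mod_cast Nat.one_le_cast.mpr h1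
  · exact le_top

lemma map_restrict (n : ℕ) {S : Set J} (hS : MeasurableSet S) (hsub : S ⊆ (R.p n).dom) :
    Measure.map (R.p n).f (G.μ.restrict S) =
      G.μ.restrict ((R.p n).g ⁻¹' S ∩ (R.p n).ran) := by
  ext B hB
  rw [Measure.map_apply (R.p n).mf hB, Measure.restrict_apply ((R.p n).mf hB),
    Measure.restrict_apply hB]
  have h1 : (R.p n).f ⁻¹' B ∩ S = ((R.p n).f ⁻¹' B ∩ S) ∩ (R.p n).dom :=
    (Set.inter_eq_self_of_subset_left (fun x hx => hsub hx.2)).symm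
  rw [h1, (R.p n).pres _ (((R.p n).mf hB).inter hS)]
  congr 1
  ext y
  simp only [mem_inter_iff, mem_preimage]
  constructor
  · rintro ⟨⟨hyB, hyS⟩, hyr⟩
    rw [(R.p n).fg y hyr] at hyB
    exact ⟨hyB, hyS, hyr⟩
  · rintro ⟨hyB, hyS, hyr⟩
    exact ⟨⟨by rw [(R.p n).fg y hyr]; exact hyB, hyS⟩, hyr⟩

lemma lint_transport (n : ℕ) {S : Set J} (hS : MeasurableSet S) (hsub : S ⊆ (R.p n).dom)
    {φ : J → ℝ≥0∞} (hφ : Measurable φ) :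
    ∫⁻ x in S, φ ((R.p n).f x) ∂G.μ =
      ∫⁻ y in (R.p n).g ⁻¹' S ∩ (R.p n).ran, φ y ∂G.μ := by
  rw [← R.map_restrict n hS hsub, lintegral_map hφ (R.p n).mf]

/-- the central mass-transport identity -/
lemma key {A : Set J} (hA : MeasurableSet A) :
    ∫⁻ x in R.Fin, R.cnt A x * (R.cls_cnt x)⁻¹ ∂G.μ = G.μ (A ∩ R.Fin) := by
  set φ : J → ℝ≥0∞ := fun y => (R.cls_cnt y)⁻¹ with hφdef
  have hφm : Measurable φ := R.cls_cnt_meas.inv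
  set T : ℕ → Set J := fun n => (R.Fin ∩ R.U' n) ∩ (R.p n).f ⁻¹' A with hTdef
  have hTm : ∀ n, MeasurableSet (T n) :=
    fun n => (R.measFin.inter (R.measU' n)).inter ((R.p n).mf hA)
  have hTsub : ∀ n, T n ⊆ (R.p n).dom := fun n x hx => hx.1.2.1
  have hpt : ∀ x, (R.Fin).indicator (fun z => R.cnt A z * (R.cls_cnt z)⁻¹) x =
      ∑' n, (T n).indicator φ x := by
    intro x
    by_cases hx : x ∈ R.Fin
    · rw [Set.indicator_of_mem hx]
      have h1 : R.cnt A x * (R.cls_cnt x)⁻¹ =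
          ∑' n, ((R.U' n ∩ (R.p n).f ⁻¹' A).indicator (fun _ => (1:ℝ≥0∞)) x
            * (R.cls_cnt x)⁻¹) := by
        rw [show R.cnt A x =
          ∑' n, (R.U' n ∩ (R.p n).f ⁻¹' A).indicator (fun _ => (1:ℝ≥0∞)) x from rfl,
          ENNReal.tsum_mul_right]
      rw [h1]
      refine tsum_congr (fun n => ?_)
      by_cases hn : x ∈ R.U' n ∩ (R.p n).f ⁻¹' A
      · rw [Set.indicator_of_mem hn (fun _ => (1:ℝ≥0∞)), one_mul,
          Set.indicator_of_mem (by exact ⟨⟨hx, hn.1⟩, hn.2⟩) φ]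
      · rw [Set.indicator_of_notMem hn (fun _ => (1:ℝ≥0∞)), zero_mul,
          Set.indicator_of_notMem (by exact fun hc => hn ⟨hc.1.2, hc.2⟩) φ]
    · rw [Set.indicator_of_notMem hx]
      symm
      have hz : ∀ n, (T n).indicator φ x = 0 :=
        fun n => Set.indicator_of_notMem (fun hc => hx hc.1.1) φ
      rw [tsum_congr hz, tsum_zero]
  have hstep1 : ∫⁻ x in R.Fin, R.cnt A x * (R.cls_cnt x)⁻¹ ∂G.μ =
      ∑' n, ∫⁻ x in T n, φ x ∂G.μ := by
    rw [← lintegral_indicator R.measFin, lintegral_congr hpt,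
      lintegral_tsum (fun n => (hφm.indicator (hTm n)).aemeasurable)]
    exact tsum_congr (fun n => lintegral_indicator (hTm n) φ)
  set Im : ℕ → Set J := fun n => (R.p n).g ⁻¹' (T n) ∩ (R.p n).ran with hImdef
  have hImm : ∀ n, MeasurableSet (Im n) := fun n => ((R.p n).mg (hTm n)).inter (R.p n).mr
  have hstep2 : ∀ n, ∫⁻ x in T n, φ x ∂G.μ = ∫⁻ y in Im n, φ y ∂G.μ := by
    intro n
    rw [← R.lint_transport n (hTm n) (hTsub n) hφm]
    refine setLIntegral_congr_fun (hTm n) (fun x hx => ?_)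
    show φ x = φ ((R.p n).f x)
    rw [hφdef]
    simp only
    rw [R.cls_cnt_inv ((R.p n).rel x (hTsub n hx))]
  have hmemIm : ∀ n y, y ∈ Im n ↔ ((R.p n).g y ∈ T n ∧ y ∈ (R.p n).ran) := by
    intro n y
    rfl
  have hcount : ∀ y, (∑' n, (Im n).indicator (fun _ => (1:ℝ≥0∞)) y) =
      (A ∩ R.Fin).indicator R.cls_cnt y := by
    intro y
    have hpt2 : ∀ n, (Im n).indicator (fun _ => (1:ℝ≥0∞)) y =
        ({n | y ∈ Im n}).indicator (fun _ => (1:ℝ≥0∞)) n := by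
      intro n
      by_cases hn : y ∈ Im n
      · rw [Set.indicator_of_mem hn (fun _ => (1:ℝ≥0∞)),
          Set.indicator_of_mem (by exact hn) (fun _ => (1:ℝ≥0∞))]
      · rw [Set.indicator_of_notMem hn (fun _ => (1:ℝ≥0∞)),
          Set.indicator_of_notMem (by exact hn) (fun _ => (1:ℝ≥0∞))]
    rw [tsum_congr hpt2, tsum_indicator_count]
    set K := {n | y ∈ Im n} with hK
    by_cases hy : y ∈ A ∩ R.Fin
    · have himg2 : (fun n => (R.p n).g y) '' K = kls G y := by
        ext x
        constructor
        · rintro ⟨n, hn, rfl⟩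
          rw [hK, mem_setOf_eq, hmemIm] at hn
          obtain ⟨hgT, hyr⟩ := hn
          have hd : (R.p n).g y ∈ (R.p n).dom := hTsub n hgT
          have : rtg G ((R.p n).g y) y := by
            have h5 := (R.p n).rel _ hd
            rwa [(R.p n).fg y hyr] at h5
          exact rtg_symm this
        · intro hx
          have hxy : rtg G x y := rtg_symm hx
          obtain ⟨n, hn, hnv⟩ := R.exists_U' hxy
          have hyr : y ∈ (R.p n).ran := by
            rw [← hnv]; exact (R.p n).mapsf x hn.1
          have hgy : (R.p n).g y = x := by
            rw [← hnv, (R.p n).gf x hn.1]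
          refine ⟨n, ?_, hgy⟩
          rw [hK, mem_setOf_eq, hmemIm, hgy]
          refine ⟨⟨⟨?_, hn⟩, ?_⟩, hyr⟩
          · exact (R.Fin_inv hxy).mpr hy.2
          · show (R.p n).f x ∈ A
            rw [hnv]; exact hy.1
      have hinj2 : InjOn (fun n => (R.p n).g y) K := by
        intro n hn n' hn' hval
        have hval' : (R.p n).g y = (R.p n').g y := hval
        rw [hK, mem_setOf_eq, hmemIm] at hn hn'
        have h1 : (R.p n).g y ∈ R.U' n := hn.1.1.2
        have h2 : (R.p n').g y ∈ R.U' n' := hn'.1.1.2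
        refine R.uniq_U' h1 (by rw [hval']; exact h2) ?_
        rw [(R.p n).fg y hn.2]
        show y = (R.p n').f ((R.p n).g y)
        rw [hval', (R.p n').fg y hn'.2]
      have hkfin : (kls G y).Finite := (R.mem_Fin_iff y).mp hy.2
      have hKfin : K.Finite := Set.Finite.of_finite_image (himg2 ▸ hkfin) hinj2
      rw [if_pos hKfin, Set.indicator_of_mem hy, R.cls_cnt_eq, if_pos hkfin,
        ← himg2, Set.ncard_image_of_injOn hinj2]
    · have hKempty : K = ∅ := by
        rw [Set.eq_empty_iff_forall_notMem]
        intro n hn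
        rw [hK, mem_setOf_eq, hmemIm] at hn
        obtain ⟨hgT, hyr⟩ := hn
        have hd : (R.p n).g y ∈ (R.p n).dom := hTsub n hgT
        have hrel : rtg G ((R.p n).g y) y := by
          have h5 := (R.p n).rel _ hd
          rwa [(R.p n).fg y hyr] at h5
        have hyA : y ∈ A := by
          have := hgT.2
          show y ∈ A
          rw [← (R.p n).fg y hyr]
          exact this
        have hyF : y ∈ R.Fin := (R.Fin_inv hrel).mp hgT.1.1
        exact hy ⟨hyA, hyF⟩
      rw [hKempty]
      simp [Set.indicator_of_notMem hy]
  have hstep3 : ∑' n, ∫⁻ y in Im n, φ y ∂G.μ = G.μ (A ∩ R.Fin) := by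
    calc ∑' n, ∫⁻ y in Im n, φ y ∂G.μ
        = ∑' n, ∫⁻ y, (Im n).indicator φ y ∂G.μ :=
          tsum_congr (fun n => (lintegral_indicator (hImm n) φ).symm)
      _ = ∫⁻ y, ∑' n, (Im n).indicator φ y ∂G.μ :=
          (lintegral_tsum (fun n => (hφm.indicator (hImm n)).aemeasurable)).symm
      _ = ∫⁻ y, (A ∩ R.Fin).indicator (fun _ => (1:ℝ≥0∞)) y ∂G.μ := by
          refine lintegral_congr (fun y => ?_)
          have h6 : ∀ n, (Im n).indicator φ y =
              φ y * (Im n).indicator (fun _ => (1:ℝ≥0∞)) y := by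
            intro n
            by_cases hn : y ∈ Im n
            · rw [Set.indicator_of_mem hn, Set.indicator_of_mem hn, mul_one]
            · rw [Set.indicator_of_notMem hn, Set.indicator_of_notMem hn, mul_zero]
          rw [tsum_congr h6, ENNReal.tsum_mul_left, hcount y]
          by_cases hy : y ∈ A ∩ R.Fin
          · rw [Set.indicator_of_mem hy, Set.indicator_of_mem hy]
            rw [hφdef]
            simp only
            refine ENNReal.inv_mul_cancel ?_ hy.2
            intro hc
            have := R.cls_cnt_ge_one y
            rw [hc] at this
            simp at this
          · rw [Set.indicator_of_notMem hy, Set.indicator_of_notMem hy, mul_zero]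
      _ = G.μ (A ∩ R.Fin) := by
          rw [lintegral_indicator (hA.inter R.measFin), setLIntegral_one]
  rw [hstep1, tsum_congr hstep2, hstep3]

lemma cnt_le (A : Set J) (x : J) : R.cnt A x ≤ R.cls_cnt x := by
  refine ENNReal.tsum_le_tsum (fun n => ?_)
  refine Set.indicator_le_indicator_of_subset (by exact fun z hz => ⟨hz.1, mem_univ _⟩)
    (fun _ => zero_le) x

lemma bpart (R : RFam G) (s : Setoid J) (hs : ∀ x y : J, s.r x y ↔ rtg G x y) : IsBPartition s := by
  intro A hA
  have hsat : s.sat A = ⋃ n, ((R.p n).dom ∩ (R.p n).f ⁻¹' A) := by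
    ext x
    simp only [Setoid.sat, mem_setOf_eq, mem_iUnion, mem_inter_iff, mem_preimage]
    constructor
    · rintro ⟨y, hyA, hxy⟩
      obtain ⟨n, hn, hnv⟩ := R.cover x y ((hs x y).mp hxy)
      exact ⟨n, hn, by rw [hnv]; exact hyA⟩
    · rintro ⟨n, hn, hnA⟩
      exact ⟨(R.p n).f x, hnA, (hs _ _).mpr ((R.p n).rel x hn)⟩
  rw [hsat]
  exact MeasurableSet.iUnion (fun n => (R.p n).md.inter ((R.p n).mf hA))

lemma rerand (R : RFam G) (s : Setoid J) (hs : ∀ x y : J, s.r x y ↔ rtg G x y) : HasRerand s G.μ := by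
  intro A hA
  haveI := G.prob
  have hcls : ∀ x, s.cls x = kls G x := by
    intro x
    ext y
    exact hs x y
  set f1 : J → ℝ := fun x => (R.cnt A x).toReal / (R.cls_cnt x).toReal with hf1
  set φ' : J → ℝ := R.Fin.piecewise f1 (A.indicator 1) with hφ'
  have hintg : ∀ x : J,
      (if (s.cls x).Finite then (Nat.card ↥(s.cls x ∩ A) : ℝ) / (Nat.card ↥(s.cls x))
        else A.indicator 1 x) = φ' x := by
    intro x
    by_cases hx : (kls G x).Finite
    · have hxF : x ∈ R.Fin := (R.mem_Fin_iff x).mpr hx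
      rw [if_pos (by rw [hcls]; exact hx), hφ', Set.piecewise_eq_of_mem _ _ _ hxF, hf1]
      have h1 : R.cnt A x = ((kls G x ∩ A).ncard : ℝ≥0∞) := by
        rw [cnt_eq, if_pos (hx.subset inter_subset_left)]
      have h2 : R.cls_cnt x = ((kls G x).ncard : ℝ≥0∞) := by
        rw [cls_cnt_eq, if_pos hx]
      show (Nat.card ↥(s.cls x ∩ A) : ℝ) / (Nat.card ↥(s.cls x)) =
        (R.cnt A x).toReal / (R.cls_cnt x).toReal
      rw [h1, h2]
      rw [show ((((kls G x ∩ A).ncard : ℕ) : ℝ≥0∞)).toReal = ((kls G x ∩ A).ncard : ℝ) by simp,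
        show ((((kls G x).ncard : ℕ) : ℝ≥0∞)).toReal = ((kls G x).ncard : ℝ) by simp]
      congr 2
      · rw [Nat.card_coe_set_eq, hcls]
      · rw [Nat.card_coe_set_eq, hcls]
    · have hxF : x ∉ R.Fin := fun hc => hx ((R.mem_Fin_iff x).mp hc)
      rw [if_neg (by rw [hcls]; exact hx), hφ', Set.piecewise_eq_of_notMem _ _ _ hxF]
  have hφ'meas : Measurable φ' :=
    Measurable.piecewise R.measFin
      (((R.cnt_meas hA).ennreal_toReal).div (R.cls_cnt_meas.ennreal_toReal))
      (measurable_one.indicator hA)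
  have hφ'nonneg : ∀ x, 0 ≤ φ' x := by
    intro x
    rw [hφ']
    by_cases hx : x ∈ R.Fin
    · rw [Set.piecewise_eq_of_mem _ _ _ hx, hf1]
      positivity
    · rw [Set.piecewise_eq_of_notMem _ _ _ hx]
      exact Set.indicator_nonneg (fun _ _ => zero_le_one) x
  rw [rerandProb]
  rw [integral_congr_ae (ae_of_all _ hintg)]
  rw [integral_eq_lintegral_of_nonneg_ae (ae_of_all _ hφ'nonneg)
    hφ'meas.aestronglyMeasurable]
  have hsplit : ∫⁻ x, ENNReal.ofReal (φ' x) ∂G.μ = G.μ A := by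
    rw [← lintegral_add_compl (fun x => ENNReal.ofReal (φ' x)) R.measFin]
    have hFinPart : ∫⁻ x in R.Fin, ENNReal.ofReal (φ' x) ∂G.μ = G.μ (A ∩ R.Fin) := by
      rw [← R.key hA]
      refine setLIntegral_congr_fun R.measFin (fun x hx => ?_)
      rw [hφ', Set.piecewise_eq_of_mem _ _ _ hx, hf1]
      have hbne : R.cls_cnt x ≠ ⊤ := hx
      have hbne0 : R.cls_cnt x ≠ 0 := by
        intro hc
        have := R.cls_cnt_ge_one x
        rw [hc] at this
        simp at this
      have hane : R.cnt A x ≠ ⊤ := fun hc =>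
        hbne (top_le_iff.mp (hc ▸ R.cnt_le A x))
      have hbpos : 0 < (R.cls_cnt x).toReal := ENNReal.toReal_pos hbne0 hbne
      rw [ENNReal.ofReal_div_of_pos hbpos, ENNReal.ofReal_toReal hane,
        ENNReal.ofReal_toReal hbne, ENNReal.div_eq_inv_mul, mul_comm]
    have hCoPart : ∫⁻ x in R.Finᶜ, ENNReal.ofReal (φ' x) ∂G.μ = G.μ (A ∩ R.Finᶜ) := by
      have hptc : ∀ x, x ∈ R.Finᶜ →
          ENNReal.ofReal (φ' x) = A.indicator (fun _ => (1:ℝ≥0∞)) x := by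
        intro x hx
        rw [hφ', Set.piecewise_eq_of_notMem _ _ _ hx]
        by_cases hxA : x ∈ A
        · rw [Set.indicator_of_mem hxA, Set.indicator_of_mem hxA]
          simp
        · rw [Set.indicator_of_notMem hxA, Set.indicator_of_notMem hxA]
          simp
      rw [setLIntegral_congr_fun R.measFin.compl hptc,
        lintegral_indicator hA, Measure.restrict_restrict hA, setLIntegral_one]
    rw [hFinPart, hCoPart]
    have : A ∩ R.Finᶜ = A \ R.Fin := by rw [Set.diff_eq]
    rw [this, measure_inter_add_diff A R.measFin]
  rw [hsplit]

end RFam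
end Final

end
end GraphingAux

/-- For a graphing `G`, the partition of its vertex set into connected
components is a `B`-partition (saturations of Borel sets are Borel) and it has the
re-randomizing property with respect to the underlying measure. -/
theorem Graphing.components_bPartition_and_rerand {J : Type*} [MeasurableSpace J]
    [StandardBorelSpace J] (G : Graphing J) :
    ∃ s : Setoid J,
      (∀ x y : J, s.r x y ↔ Relation.ReflTransGen G.E x y) ∧
      IsBPartition s ∧ HasRerand s G.μ := by
  classical
  rcases isEmpty_or_nonempty J with hempty | hne
  · exfalso
    have h0 := G.prob.measure_univ
    have huniv : (Set.univ : Set J) = ∅ := Set.univ_eq_empty_iff.mpr hempty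
    rw [huniv, measure_empty] at h0
    exact zero_ne_one h0
  · obtain ⟨R⟩ := GraphingAux.exists_rfam G
    set s : Setoid J := ⟨fun x y => Relation.ReflTransGen G.E x y,
      ⟨fun _ => Relation.ReflTransGen.refl,
        fun h => GraphingAux.rtg_symm h,
        fun h1 h2 => Relation.ReflTransGen.trans h1 h2⟩⟩ with hs
    exact ⟨s, fun x y => Iff.rfl, R.bpart s (fun x y => Iff.rfl),
      R.rerand s (fun x y => Iff.rfl)⟩
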